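/- The limiting root-degree distribution of the type III uniform infinite planar triangulation is a probability distribution: Σ_{k=3}^{∞} ((2k−3)! / ((k−3)!(k−1)!)) · (3/16)^{k−1} = 1. -/

import Mathlib

open Finset

section aux

noncomputable def aX : ℕ → ℝ := fun n => (catalan n : ℝ) * (3 / 16) ^ n

lemma catalan_le_four_pow (n : ℕ) : (catalan n : ℕ) ≤ 4 ^ n := by
  have h1 : catalan n ≤ (n + 1) * catalan n := Nat.le_mul_of_pos_left _ (Nat.succ_pos n)
  have h2 : (n + 1) * catalan n = Nat.centralBinom n := succ_mul_catalan_eq_centralBinom n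
  have h3 : Nat.centralBinom n ≤ 4 ^ n := by
    have := Finset.single_le_sum (f := fun m => (2 * n).choose m)
      (fun i _ => Nat.zero_le _) (show n ∈ Finset.range (2 * n + 1) by
        simp; omega)
    calc Nat.centralBinom n = (2 * n).choose n := rfl
      _ ≤ ∑ m ∈ Finset.range (2 * n + 1), (2 * n).choose m := this
      _ = 2 ^ (2 * n) := Nat.sum_range_choose (2 * n)
      _ = 4 ^ n := by rw [pow_mul]; norm_num
  omega

lemma aX_nonneg (n : ℕ) : 0 ≤ aX n := by
  unfold aX; positivity

lemma aX_le (n : ℕ) : aX n ≤ (3 / 4) ^ n := by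
  unfold aX
  have h : (catalan n : ℝ) ≤ 4 ^ n := by exact_mod_cast catalan_le_four_pow n
  calc (catalan n : ℝ) * (3 / 16) ^ n ≤ 4 ^ n * (3 / 16) ^ n := by
        apply mul_le_mul_of_nonneg_right h; positivity
    _ = (3 / 4) ^ n := by rw [← mul_pow]; norm_num

lemma summable_aX : Summable aX :=
  Summable.of_nonneg_of_le aX_nonneg aX_le (summable_geometric_of_lt_one (by norm_num) (by norm_num))

lemma summable_pow_aX (k : ℕ) : Summable (fun n : ℕ => (n : ℝ) ^ k * aX n) := by
  apply Summable.of_nonneg_of_le (f := fun n : ℕ => (n : ℝ) ^ k * (3 / 4) ^ n)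
    (fun n => by have := aX_nonneg n; positivity)
  · intro n
    exact mul_le_mul_of_nonneg_left (aX_le n) (by positivity)
  · exact summable_pow_mul_geometric_of_norm_lt_one k (by norm_num)

lemma summable_mul_aX (f : ℕ → ℝ) (k : ℕ) (hf : ∀ n, |f n| ≤ (n : ℝ) ^ k + 1) :
    Summable (fun n => f n * aX n) := by
  apply Summable.of_norm
  apply Summable.of_nonneg_of_le (f := fun n : ℕ => ((n : ℝ) ^ k + 1) * (3 / 4) ^ n)
    (fun n => norm_nonneg _)
  · intro n
    rw [norm_mul, Real.norm_of_nonneg (aX_nonneg n)]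
    exact mul_le_mul ((Real.norm_eq_abs _ ▸ hf n)) (aX_le n) (aX_nonneg n) (by positivity)
  · simp only [add_mul, one_mul]
    exact (summable_pow_mul_geometric_of_norm_lt_one k (by norm_num)).add
      (summable_geometric_of_lt_one (by norm_num) (by norm_num))

lemma summable_norm_mul_aX (f : ℕ → ℝ) (k : ℕ) (hf : ∀ n, |f n| ≤ (n : ℝ) ^ k + 1) :
    Summable (fun n => ‖f n * aX n‖) := by
  have := summable_mul_aX (fun n => |f n|) k (by simpa using hf)
  apply this.congr
  intro n
  rw [norm_mul, Real.norm_of_nonneg (aX_nonneg n), Real.norm_eq_abs]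

end aux


section main

lemma summable_norm_cauchy (f g : ℕ → ℝ) (kf kg : ℕ)
    (hf : ∀ n, |f n| ≤ (n : ℝ) ^ kf + 1) (hg : ∀ n, |g n| ≤ (n : ℝ) ^ kg + 1) :
    Summable (fun n => ∑ ij ∈ Finset.HasAntidiagonal.antidiagonal n, (f ij.1 * aX ij.1) * (g ij.2 * aX ij.2)) :=
  (summable_norm_sum_mul_antidiagonal_of_summable_norm
    (summable_norm_mul_aX f kf hf) (summable_norm_mul_aX g kg hg)).of_norm

lemma cauchy_tsum (f g : ℕ → ℝ) (kf kg : ℕ)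
    (hf : ∀ n, |f n| ≤ (n : ℝ) ^ kf + 1) (hg : ∀ n, |g n| ≤ (n : ℝ) ^ kg + 1) :
    (∑' n, f n * aX n) * (∑' n, g n * aX n) =
      ∑' n, ∑ ij ∈ Finset.HasAntidiagonal.antidiagonal n, (f ij.1 * aX ij.1) * (g ij.2 * aX ij.2) :=
  tsum_mul_tsum_eq_tsum_sum_antidiagonal_of_summable_norm
    (summable_norm_mul_aX f kf hf) (summable_norm_mul_aX g kg hg)

noncomputable def oneF : ℕ → ℝ := fun _ => 1
noncomputable def idF : ℕ → ℝ := fun n => (n : ℝ)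
noncomputable def wF : ℕ → ℝ := fun n => ((n : ℝ) ^ 2 - 1) / 2

lemma bound_oneF : ∀ n : ℕ, |oneF n| ≤ (n : ℝ) ^ 0 + 1 := by intro n; simp [oneF]
lemma bound_idF : ∀ n : ℕ, |idF n| ≤ (n : ℝ) ^ 1 + 1 := by
  intro n
  simp only [idF]
  rw [abs_of_nonneg (Nat.cast_nonneg n)]
  nlinarith [Nat.cast_nonneg (α := ℝ) n]
lemma bound_wF : ∀ n : ℕ, |wF n| ≤ (n : ℝ) ^ 2 + 1 := by
  intro n
  simp only [wF]
  rw [abs_div, abs_of_nonneg (by norm_num : (0:ℝ) ≤ 2), div_le_iff₀ (by norm_num)]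
  have h0 : (0:ℝ) ≤ (n:ℝ)^2 := by positivity
  cases' abs_cases ((n:ℝ)^2 - 1) with h h <;> nlinarith

lemma conv_aa (n : ℕ) :
    ∑ ij ∈ Finset.HasAntidiagonal.antidiagonal n, aX ij.1 * aX ij.2 = (catalan (n + 1) : ℝ) * (3 / 16) ^ n := by
  rw [catalan_succ' n]
  push_cast
  rw [Finset.sum_mul]
  apply Finset.sum_congr rfl
  intro ij hij
  have h := Finset.HasAntidiagonal.mem_antidiagonal.mp hij
  unfold aX
  rw [← h, pow_add]
  ring

noncomputable def AX : ℝ := ∑' n, aX n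
noncomputable def BX : ℝ := ∑' n : ℕ, idF n * aX n
noncomputable def DX : ℝ := ∑' n : ℕ, wF n * aX n

lemma one_mul_aX : (∑' n : ℕ, oneF n * aX n) = AX := by unfold AX oneF; simp

lemma AX_quad : AX = 1 + (3 / 16) * (AX * AX) := by
  have hAA : AX * AX = ∑' n : ℕ, (catalan (n + 1) : ℝ) * (3 / 16) ^ n := by
    rw [← one_mul_aX, cauchy_tsum oneF oneF 0 0 bound_oneF bound_oneF]
    apply tsum_congr
    intro n
    simp only [oneF, one_mul]
    exact conv_aa n
  have h0 : AX = aX 0 + ∑' n, aX (n + 1) := Summable.tsum_eq_zero_add summable_aX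
  have h1 : (∑' n, aX (n + 1)) = (3 / 16) * ∑' n : ℕ, (catalan (n + 1) : ℝ) * (3 / 16) ^ n := by
    rw [← tsum_mul_left]
    apply tsum_congr
    intro n
    unfold aX
    rw [pow_succ]
    ring
  conv_lhs => rw [h0, h1]
  rw [← hAA]
  unfold aX
  norm_num

lemma AX_lt_four : AX < 4 := by
  have h := Summable.tsum_lt_tsum_of_nonneg aX_nonneg aX_le
    (show aX 1 < (3 / 4 : ℝ) ^ 1 by unfold aX; norm_num)
    (summable_geometric_of_lt_one (by norm_num) (by norm_num))
  have hg : (∑' n : ℕ, (3 / 4 : ℝ) ^ n) = 4 := by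
    rw [tsum_geometric_of_lt_one (by norm_num) (by norm_num)]; norm_num
  calc AX < ∑' n : ℕ, (3 / 4 : ℝ) ^ n := h
    _ = 4 := hg

lemma AX_val : AX = 4 / 3 := by
  have h := AX_quad
  have h4 := AX_lt_four
  have hfac : (3 * AX - 4) * (AX - 4) = 0 := by nlinarith
  rcases mul_eq_zero.mp hfac with h' | h'
  · linarith
  · linarith

lemma BX_quad : BX = (3 / 16) * (2 * (BX * AX) + AX * AX) := by
  have hconv : ∀ n : ℕ,
      (∑ ij ∈ Finset.HasAntidiagonal.antidiagonal n, (idF ij.1 * aX ij.1) * (oneF ij.2 * aX ij.2))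
      + (∑ ij ∈ Finset.HasAntidiagonal.antidiagonal n, (oneF ij.1 * aX ij.1) * (idF ij.2 * aX ij.2))
      + (∑ ij ∈ Finset.HasAntidiagonal.antidiagonal n, (oneF ij.1 * aX ij.1) * (oneF ij.2 * aX ij.2))
      = ((n : ℝ) + 1) * ((catalan (n + 1) : ℝ) * (3 / 16) ^ n) := by
    intro n
    rw [← conv_aa n, ← Finset.sum_add_distrib, ← Finset.sum_add_distrib, Finset.mul_sum]
    apply Finset.sum_congr rfl
    intro ij hij
    have h := Finset.HasAntidiagonal.mem_antidiagonal.mp hij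
    have h' : (ij.1 : ℝ) + (ij.2 : ℝ) = (n : ℝ) := by exact_mod_cast congrArg Nat.cast h
    simp only [oneF, idF]
    linear_combination aX ij.1 * aX ij.2 * h'
  have hBA : BX * AX = ∑' n, ∑ ij ∈ Finset.HasAntidiagonal.antidiagonal n,
      (idF ij.1 * aX ij.1) * (oneF ij.2 * aX ij.2) := by
    rw [← one_mul_aX]
    exact cauchy_tsum idF oneF 1 0 bound_idF bound_oneF
  have hAB : AX * BX = ∑' n, ∑ ij ∈ Finset.HasAntidiagonal.antidiagonal n,
      (oneF ij.1 * aX ij.1) * (idF ij.2 * aX ij.2) := by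
    rw [← one_mul_aX]
    exact cauchy_tsum oneF idF 0 1 bound_oneF bound_idF
  have hAA : AX * AX = ∑' n, ∑ ij ∈ Finset.HasAntidiagonal.antidiagonal n,
      (oneF ij.1 * aX ij.1) * (oneF ij.2 * aX ij.2) := by
    rw [← one_mul_aX]
    exact cauchy_tsum oneF oneF 0 0 bound_oneF bound_oneF
  have s4 := summable_norm_cauchy idF oneF 1 0 bound_idF bound_oneF
  have s5 := summable_norm_cauchy oneF idF 0 1 bound_oneF bound_idF
  have s6 := summable_norm_cauchy oneF oneF 0 0 bound_oneF bound_oneF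
  have hsum : 2 * (BX * AX) + AX * AX
      = ∑' n : ℕ, ((n : ℝ) + 1) * ((catalan (n + 1) : ℝ) * (3 / 16) ^ n) := by
    have hre : 2 * (BX * AX) + AX * AX = BX * AX + (AX * BX + AX * AX) := by
      rw [mul_comm AX BX]; ring
    rw [hre, hBA, hAB, hAA, ← Summable.tsum_add s5 s6, ← Summable.tsum_add s4 (s5.add s6)]
    apply tsum_congr
    intro n
    linarith [hconv n]
  have h0 : BX = ∑' n : ℕ, idF (n + 1) * aX (n + 1) := by
    unfold BX
    rw [Summable.tsum_eq_zero_add (summable_mul_aX idF 1 bound_idF)]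
    simp [idF]
  have h1 : (∑' n : ℕ, idF (n + 1) * aX (n + 1))
      = (3 / 16) * ∑' n : ℕ, ((n : ℝ) + 1) * ((catalan (n + 1) : ℝ) * (3 / 16) ^ n) := by
    rw [← tsum_mul_left]
    apply tsum_congr
    intro n
    unfold aX idF
    push_cast
    rw [pow_succ]
    ring
  conv_lhs => rw [h0, h1]
  rw [← hsum]

lemma BX_val : BX = 2 / 3 := by
  have h := BX_quad
  rw [AX_val] at h
  linarith

lemma DX_quad : DX = -(1 / 2) + (3 / 16) * (2 * (DX * AX) + BX * BX + 2 * (BX * AX) + AX * AX) := by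
  have hconv : ∀ n : ℕ,
      (∑ ij ∈ Finset.HasAntidiagonal.antidiagonal n, (wF ij.1 * aX ij.1) * (oneF ij.2 * aX ij.2))
      + (∑ ij ∈ Finset.HasAntidiagonal.antidiagonal n, (oneF ij.1 * aX ij.1) * (wF ij.2 * aX ij.2))
      + (∑ ij ∈ Finset.HasAntidiagonal.antidiagonal n, (idF ij.1 * aX ij.1) * (idF ij.2 * aX ij.2))
      + (∑ ij ∈ Finset.HasAntidiagonal.antidiagonal n, (idF ij.1 * aX ij.1) * (oneF ij.2 * aX ij.2))
      + (∑ ij ∈ Finset.HasAntidiagonal.antidiagonal n, (oneF ij.1 * aX ij.1) * (idF ij.2 * aX ij.2))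
      + (∑ ij ∈ Finset.HasAntidiagonal.antidiagonal n, (oneF ij.1 * aX ij.1) * (oneF ij.2 * aX ij.2))
      = wF (n + 1) * ((catalan (n + 1) : ℝ) * (3 / 16) ^ n) := by
    intro n
    rw [← conv_aa n, ← Finset.sum_add_distrib, ← Finset.sum_add_distrib, ← Finset.sum_add_distrib,
      ← Finset.sum_add_distrib, ← Finset.sum_add_distrib, Finset.mul_sum]
    apply Finset.sum_congr rfl
    intro ij hij
    have h := Finset.HasAntidiagonal.mem_antidiagonal.mp hij
    have h' : (ij.1 : ℝ) + (ij.2 : ℝ) = (n : ℝ) := by exact_mod_cast congrArg Nat.cast h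
    simp only [oneF, idF, wF]
    push_cast
    linear_combination aX ij.1 * aX ij.2 * ((ij.1 : ℝ) + (ij.2 : ℝ) + (n : ℝ) + 2) / 2 * h'
  have hDA : DX * AX = ∑' n, ∑ ij ∈ Finset.HasAntidiagonal.antidiagonal n,
      (wF ij.1 * aX ij.1) * (oneF ij.2 * aX ij.2) := by
    rw [← one_mul_aX]; exact cauchy_tsum wF oneF 2 0 bound_wF bound_oneF
  have hAD : AX * DX = ∑' n, ∑ ij ∈ Finset.HasAntidiagonal.antidiagonal n,
      (oneF ij.1 * aX ij.1) * (wF ij.2 * aX ij.2) := by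
    rw [← one_mul_aX]; exact cauchy_tsum oneF wF 0 2 bound_oneF bound_wF
  have hBB : BX * BX = ∑' n, ∑ ij ∈ Finset.HasAntidiagonal.antidiagonal n,
      (idF ij.1 * aX ij.1) * (idF ij.2 * aX ij.2) :=
    cauchy_tsum idF idF 1 1 bound_idF bound_idF
  have hBA : BX * AX = ∑' n, ∑ ij ∈ Finset.HasAntidiagonal.antidiagonal n,
      (idF ij.1 * aX ij.1) * (oneF ij.2 * aX ij.2) := by
    rw [← one_mul_aX]; exact cauchy_tsum idF oneF 1 0 bound_idF bound_oneF
  have hAB : AX * BX = ∑' n, ∑ ij ∈ Finset.HasAntidiagonal.antidiagonal n,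
      (oneF ij.1 * aX ij.1) * (idF ij.2 * aX ij.2) := by
    rw [← one_mul_aX]; exact cauchy_tsum oneF idF 0 1 bound_oneF bound_idF
  have hAA : AX * AX = ∑' n, ∑ ij ∈ Finset.HasAntidiagonal.antidiagonal n,
      (oneF ij.1 * aX ij.1) * (oneF ij.2 * aX ij.2) := by
    rw [← one_mul_aX]; exact cauchy_tsum oneF oneF 0 0 bound_oneF bound_oneF
  have s1 := summable_norm_cauchy wF oneF 2 0 bound_wF bound_oneF
  have s2 := summable_norm_cauchy oneF wF 0 2 bound_oneF bound_wF
  have s3 := summable_norm_cauchy idF idF 1 1 bound_idF bound_idF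
  have s4 := summable_norm_cauchy idF oneF 1 0 bound_idF bound_oneF
  have s5 := summable_norm_cauchy oneF idF 0 1 bound_oneF bound_idF
  have s6 := summable_norm_cauchy oneF oneF 0 0 bound_oneF bound_oneF
  have hsum : 2 * (DX * AX) + BX * BX + 2 * (BX * AX) + AX * AX
      = ∑' n : ℕ, wF (n + 1) * ((catalan (n + 1) : ℝ) * (3 / 16) ^ n) := by
    have hre : 2 * (DX * AX) + BX * BX + 2 * (BX * AX) + AX * AX
        = DX * AX + (AX * DX + (BX * BX + (BX * AX + (AX * BX + AX * AX)))) := by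
      rw [mul_comm AX DX, mul_comm AX BX]; ring
    rw [hre, hDA, hAD, hBB, hBA, hAB, hAA,
      ← Summable.tsum_add s5 s6, ← Summable.tsum_add s4 (s5.add s6), ← Summable.tsum_add s3 (s4.add (s5.add s6)),
      ← Summable.tsum_add s2 (s3.add (s4.add (s5.add s6))),
      ← Summable.tsum_add s1 (s2.add (s3.add (s4.add (s5.add s6))))]
    apply tsum_congr
    intro n
    linarith [hconv n]
  have h0 : DX = wF 0 * aX 0 + ∑' n : ℕ, wF (n + 1) * aX (n + 1) :=
    Summable.tsum_eq_zero_add (summable_mul_aX wF 2 bound_wF)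
  have h1 : (∑' n : ℕ, wF (n + 1) * aX (n + 1))
      = (3 / 16) * ∑' n : ℕ, wF (n + 1) * ((catalan (n + 1) : ℝ) * (3 / 16) ^ n) := by
    rw [← tsum_mul_left]
    apply tsum_congr
    intro n
    unfold aX
    rw [pow_succ]
    ring
  have hw0 : wF 0 * aX 0 = -(1 / 2) := by simp [wF, aX]; norm_num
  conv_lhs => rw [h0, h1]
  rw [← hsum, hw0]

lemma DX_val : DX = 1 / 2 := by
  have h := DX_quad
  rw [AX_val, BX_val] at h
  linarith

lemma hasSum_w : HasSum (fun n : ℕ => wF n * aX n) (1 / 2) := by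
  have hs : Summable (fun n : ℕ => wF n * aX n) := summable_mul_aX wF 2 bound_wF
  have h := hs.hasSum
  rwa [show (∑' n : ℕ, wF n * aX n) = 1 / 2 from DX_val] at h

end main


lemma term_eq (i : ℕ) :
    (Nat.factorial (2 * i + 3) : ℝ) / (Nat.factorial i * Nat.factorial (i + 2)) * (3 / 16) ^ (i + 2)
      = wF (i + 2) * aX (i + 2) := by
  have hcat : ((i : ℝ) + 3) * (catalan (i + 2) : ℝ) = (Nat.centralBinom (i + 2) : ℝ) := by
    have h := succ_mul_catalan_eq_centralBinom (i + 2)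
    have := congrArg (Nat.cast : ℕ → ℝ) h
    push_cast at this
    linarith
  have hcb : (Nat.centralBinom (i + 2) : ℝ) * ((Nat.factorial (i + 2) : ℝ) * Nat.factorial (i + 2))
      = (Nat.factorial (2 * i + 4) : ℝ) := by
    have h := Nat.choose_mul_factorial_mul_factorial (show i + 2 ≤ 2 * (i + 2) by omega)
    have h2 : 2 * (i + 2) - (i + 2) = i + 2 := by omega
    rw [h2] at h
    have h3 : Nat.centralBinom (i + 2) = (2 * (i + 2)).choose (i + 2) := rfl
    have h4 : 2 * (i + 2) = 2 * i + 4 := by omega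
    rw [h4] at h h3
    rw [h3]
    have := congrArg (Nat.cast : ℕ → ℝ) h
    push_cast at this
    linarith [this]
  have hi : (Nat.factorial i : ℝ) ≠ 0 := by exact_mod_cast (Nat.factorial_pos i).ne'
  have hi2 : (Nat.factorial (i + 2) : ℝ) ≠ 0 := by exact_mod_cast (Nat.factorial_pos (i + 2)).ne'
  have hi3 : ((i : ℝ) + 3) ≠ 0 := by positivity
  have e1 : (catalan (i + 2) : ℝ)
      = (Nat.factorial (2 * i + 4) : ℝ) / (((i : ℝ) + 3) * ((Nat.factorial (i + 2) : ℝ) * Nat.factorial (i + 2))) := by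
    rw [← hcb, ← hcat]
    field_simp
  have hf1 : (Nat.factorial (2 * i + 4) : ℝ) = (2 * (i : ℝ) + 4) * Nat.factorial (2 * i + 3) := by
    have : 2 * i + 4 = (2 * i + 3) + 1 := by omega
    rw [this, Nat.factorial_succ]
    push_cast
    ring
  have hf2 : (Nat.factorial (i + 2) : ℝ) = ((i : ℝ) + 2) * ((i : ℝ) + 1) * Nat.factorial i := by
    rw [show i + 2 = (i + 1) + 1 from rfl, Nat.factorial_succ, Nat.factorial_succ]
    push_cast
    ring
  unfold wF aX
  rw [e1, hf1]
  rw [hf2]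
  push_cast
  field_simp
  ring

/-- the limiting root-degree distribution of the type III UIPT is a
probability distribution: Σ_{k=3}^∞ (2k−3)!/((k−3)!(k−1)!) · (3/16)^{k−1} = 1.
The sum over k ≥ 3 is written via the substitution k = i + 3. -/
theorem root_degree_distribution_sums_to_one :
    HasSum
      (fun i : ℕ =>
        (Nat.factorial (2 * (i + 3) - 3) : ℝ) /
            (Nat.factorial ((i + 3) - 3) * Nat.factorial ((i + 3) - 1)) *
          (3 / 16) ^ ((i + 3) - 1))
      1 := by
  have h2 : HasSum (fun n : ℕ => wF (n + 2) * aX (n + 2)) 1 := by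
    apply (hasSum_nat_add_iff (f := fun n : ℕ => wF n * aX n) (g := 1) 2).mpr
    have hr : (1 : ℝ) + ∑ i ∈ Finset.range 2, wF i * aX i = 1 / 2 := by
      simp [Finset.sum_range_succ, wF, aX]
      norm_num
    rw [hr]
    exact hasSum_w
  have hfun : (fun i : ℕ =>
        (Nat.factorial (2 * (i + 3) - 3) : ℝ) /
            (Nat.factorial ((i + 3) - 3) * Nat.factorial ((i + 3) - 1)) *
          (3 / 16) ^ ((i + 3) - 1))
      = (fun n : ℕ => wF (n + 2) * aX (n + 2)) := by
    funext i
    have e1 : 2 * (i + 3) - 3 = 2 * i + 3 := by omega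
    have e2 : (i + 3) - 3 = i := by omega
    have e3 : (i + 3) - 1 = i + 2 := by omega
    rw [e1, e2, e3]
    exact term_eq i
  rw [hfun]
  exact h2
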